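/- Let V(x)=k|x|^{-α} with k>0, 1<α≤2, and let (a,b) satisfy a>0, b≤0, 2a+b>0, 2a+3b≥0. Define μ̄ = 2a+b and J_k^{a,b}(φ) = S_k(φ) − (1/μ̄) K_k^{a,b}(φ). Then μ̄ J_k^{a,b}(φ) = −b∫V|φ|² − (b/2)∫(x·∇V)|φ|² − b‖φ‖_{L²}² + ((a+b)/2)‖φ‖_{L⁴}⁴. In particular J_k^{a,b}(φ) > 0 for every φ ∈ H^1(R^3) \ {0}. -/

import Mathlib

open MeasureTheory Real Filter Topology
open scoped ENNReal RealInnerProductSpace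

noncomputable section

abbrev E3 : Type := EuclideanSpace ℝ (Fin 3)

/-- The potential `V(x) = k * |x| ^ (-α)`. -/
def Vpot (k α : ℝ) (x : E3) : ℝ := k * ‖x‖ ^ (-α)

/-- The complex Laplacian (sum of second partial derivatives). -/
def lapC (f : E3 → ℂ) (x : E3) : ℂ :=
  ∑ i : Fin 3, fderiv ℝ (fun y => fderiv ℝ f y (EuclideanSpace.single i (1:ℝ))) x
    (EuclideanSpace.single i (1:ℝ))

/-- The real Laplacian. -/
def lapR (f : E3 → ℝ) (x : E3) : ℝ :=
  ∑ i : Fin 3, fderiv ℝ (fun y => fderiv ℝ f y (EuclideanSpace.single i (1:ℝ))) x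
    (EuclideanSpace.single i (1:ℝ))

/-- `∫ |∇φ|²`. -/
def gradSq (φ : E3 → ℂ) : ℝ := ∫ x, ‖fderiv ℝ φ x‖ ^ 2

/-- `∫ |φ|²`. -/
def massI (φ : E3 → ℂ) : ℝ := ∫ x, ‖φ x‖ ^ 2

/-- `∫ V |φ|²`. -/
def potI (k α : ℝ) (φ : E3 → ℂ) : ℝ := ∫ x, Vpot k α x * ‖φ x‖ ^ 2

/-- `∫ |φ|⁴`. -/
def quartI (φ : E3 → ℂ) : ℝ := ∫ x, ‖φ x‖ ^ 4

/-- `∫ (x · ∇V) |φ|²`. -/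
def xdVI (k α : ℝ) (φ : E3 → ℂ) : ℝ :=
  ∫ x, ⟪x, gradient (Vpot k α) x⟫ * ‖φ x‖ ^ 2

/-- `∫ (x ∇²V xᵀ) |φ|²`. -/
def hessI (k α : ℝ) (φ : E3 → ℂ) : ℝ :=
  ∫ x, ⟪x, fderiv ℝ (gradient (Vpot k α)) x x⟫ * ‖φ x‖ ^ 2

/-- Squared `𝓗¹_k` norm:  `∫|∇φ|² + ∫V|φ|² + ∫|φ|²`. -/
def H1kSq (k α : ℝ) (φ : E3 → ℂ) : ℝ := gradSq φ + potI k α φ + massI φ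

/-- The action functional `S_k`. -/
def Sk (k α : ℝ) (φ : E3 → ℂ) : ℝ := (1/2) * H1kSq k α φ - (1/4) * quartI φ

/-- The scaling-derivative functional `K_k^{a,b}`. -/
def Kab (k α a b : ℝ) (φ : E3 → ℂ) : ℝ :=
  ((2*a+b)/2) * gradSq φ + ((2*a+3*b)/2) * potI k α φ + (b/2) * xdVI k α φ
    + ((2*a+3*b)/2) * massI φ - ((4*a+3*b)/4) * quartI φ

/-- The virial functional `P_k = K_k^{3,-2}`. -/
def Pk (k α : ℝ) (φ : E3 → ℂ) : ℝ :=
  2 * gradSq φ - xdVI k α φ - (3/2) * quartI φ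

/-- The functional `I_k = K_k^{3,0}/3`. -/
def Ik (k α : ℝ) (φ : E3 → ℂ) : ℝ :=
  gradSq φ + potI k α φ + massI φ - quartI φ

/-- The functional `J_k^{a,b} = S_k - K_k^{a,b}/(2a+b)`. -/
def Jab (k α a b : ℝ) (φ : E3 → ℂ) : ℝ := Sk k α φ - Kab k α a b φ / (2*a+b)

/-- The scaling `φ_λ^{a,b}(x) = e^{aλ} φ(e^{-bλ} x)`. -/
def scal (a b lam : ℝ) (φ : E3 → ℂ) : E3 → ℂ :=
  fun x => Real.exp (a * lam) • φ (Real.exp (-b * lam) • x)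

/-- Membership in `H¹(ℝ³)` (with the relevant integrability properties). -/
def InH1 (φ : E3 → ℂ) : Prop :=
  MemLp φ 2 volume ∧ MemLp φ 4 volume ∧
    Integrable (fun x => ‖fderiv ℝ φ x‖ ^ 2) volume

/-- The minimization threshold `n_k^{a,b}`. -/
def nThresh (k α a b : ℝ) : ℝ :=
  sInf {r | ∃ φ : E3 → ℂ, InH1 φ ∧ eLpNorm φ 2 volume ≠ 0 ∧
    Kab k α a b φ = 0 ∧ r = Sk k α φ}

/-- The threshold `n_k` defined with the virial functional `P_k`. -/
def nPk (k α : ℝ) : ℝ :=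
  sInf {r | ∃ φ : E3 → ℂ, InH1 φ ∧ eLpNorm φ 2 volume ≠ 0 ∧
    Pk k α φ = 0 ∧ r = Sk k α φ}

/-- The ground state threshold `n₀`. -/
def n0 (α : ℝ) : ℝ := nPk 0 α

lemma Vpot_eq' (k α : ℝ) (y : E3) :
    Vpot k α y = k * (‖y‖ ^ 2) ^ (-α/2) := by
  unfold Vpot
  congr 1
  rw [← Real.rpow_natCast ‖y‖ 2, ← Real.rpow_mul (norm_nonneg y)]
  congr 1
  push_cast; ring

lemma inner_grad_Vpot (k α : ℝ) {x : E3} (hx : x ≠ 0) :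
    ⟪x, gradient (Vpot k α) x⟫ = -α * Vpot k α x := by
  have hn : (‖x‖:ℝ)^2 ≠ 0 := pow_ne_zero _ (norm_ne_zero_iff.mpr hx)
  have h2 : HasDerivAt (fun t : ℝ => t ^ (-α/2)) (-α/2 * (‖x‖^2) ^ (-α/2 - 1)) (‖x‖^2) :=
    Real.hasDerivAt_rpow_const (Or.inl hn)
  have h3 := (h2.comp_hasFDerivAt x ((hasStrictFDerivAt_norm_sq x).hasFDerivAt)).const_mul k
  have h4 : HasFDerivAt (Vpot k α)
      (k • (-α/2 * (‖x‖^2) ^ (-α/2 - 1)) • ((2:ℕ) • (innerSL ℝ x))) x := by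
    refine h3.congr_of_eventuallyEq (Filter.Eventually.of_forall fun y => ?_)
    simp [Vpot_eq' k α, Function.comp]
  have hgrad : gradient (Vpot k α) x =
      (InnerProductSpace.toDual ℝ E3).symm (fderiv ℝ (Vpot k α) x) := rfl
  rw [real_inner_comm, hgrad, InnerProductSpace.toDual_symm_apply, h4.fderiv]
  have hx2 : ⟪x, x⟫ = ‖x‖^2 := real_inner_self_eq_norm_sq x
  have hpos : (0:ℝ) < ‖x‖^2 := by positivity
  have key : (‖x‖^2 : ℝ) ^ (-α/2 - 1) * ‖x‖^2 = (‖x‖^2) ^ (-α/2) := by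
    rw [← Real.rpow_add_one (ne_of_gt hpos)]
    norm_num
  simp only [ContinuousLinearMap.smul_apply, innerSL_apply_apply, smul_eq_mul, hx2,
    Vpot_eq' k α, nsmul_eq_mul, Nat.cast_ofNat]
  linear_combination (-α*k) * key

theorem stmt6 (k α a b : ℝ) (hk : 0 < k) (hα1 : 1 < α) (hα2 : α ≤ 2)
    (ha : 0 < a) (hb : b ≤ 0) (h2ab : 0 < 2*a + b) (h2a3b : 0 ≤ 2*a + 3*b)
    (φ : E3 → ℂ) (hφ : InH1 φ)
    (hpot : Integrable (fun x => Vpot k α x * ‖φ x‖ ^ 2) volume)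
    (hxdv : Integrable (fun x => ⟪x, gradient (Vpot k α) x⟫ * ‖φ x‖ ^ 2) volume) :
    (2*a + b) * Jab k α a b φ =
      -b * potI k α φ - (b/2) * xdVI k α φ - b * massI φ + ((a+b)/2) * quartI φ ∧
    (eLpNorm φ 2 volume ≠ 0 → 0 < Jab k α a b φ) := by
  have hab : (2*a+b) ≠ 0 := ne_of_gt h2ab
  have hid : (2*a + b) * Jab k α a b φ =
      -b * potI k α φ - (b/2) * xdVI k α φ - b * massI φ + ((a+b)/2) * quartI φ := by
    unfold Jab Sk Kab H1kSq
    field_simp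
    ring
  refine ⟨hid, fun hL2 => ?_⟩
  -- x·∇V = -α V pointwise a.e.
  have hXeq : xdVI k α φ = -α * potI k α φ := by
    unfold xdVI potI
    rw [← integral_const_mul]
    refine integral_congr_ae ?_
    have h0 : ∀ᵐ (x : E3), x ≠ 0 := by
      refine ae_iff.mpr ?_
      simpa using measure_singleton (0:E3)
    filter_upwards [h0] with x hx
    rw [inner_grad_Vpot k α hx]; ring
  -- nonnegativity of the integrals
  have hP : 0 ≤ potI k α φ := by
    refine integral_nonneg fun x => ?_
    exact mul_nonneg (mul_nonneg hk.le (Real.rpow_nonneg (norm_nonneg x) _)) (by positivity)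
  have hM0 : 0 ≤ massI φ := integral_nonneg fun x => by positivity
  have hQ0 : 0 ≤ quartI φ := integral_nonneg fun x => by positivity
  -- the support of φ has positive measure
  have hsupp : 0 < volume (Function.support φ) := by
    by_contra h
    push_neg at h
    have hz : volume (Function.support φ) = 0 := le_antisymm h (by positivity)
    have hae : φ =ᵐ[volume] 0 := by
      refine ae_iff.mpr ?_
      simpa [Function.support] using hz
    exact hL2 ((eLpNorm_eq_zero_iff hφ.1.1 two_ne_zero).mpr hae)
  have hMint : Integrable (fun x => ‖φ x‖ ^ 2) volume := by
    have := hφ.1.integrable_norm_rpow two_ne_zero ENNReal.ofNat_ne_top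
    refine this.congr (Filter.Eventually.of_forall fun x => ?_)
    show ‖φ x‖ ^ ((2:ℝ≥0∞)).toReal = _
    rw [show ((2:ℝ≥0∞)).toReal = ((2:ℕ):ℝ) by simp, Real.rpow_natCast]
  have hQint : Integrable (fun x => ‖φ x‖ ^ 4) volume := by
    have := hφ.2.1.integrable_norm_rpow (by norm_num) (by norm_num)
    refine this.congr (Filter.Eventually.of_forall fun x => ?_)
    show ‖φ x‖ ^ ((4:ℝ≥0∞)).toReal = _
    rw [show ((4:ℝ≥0∞)).toReal = ((4:ℕ):ℝ) by simp, Real.rpow_natCast]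
  have hMsupp : Function.support (fun x : E3 => ‖φ x‖ ^ 2) = Function.support φ := by
    ext x; simp [Function.support]
  have hQsupp : Function.support (fun x : E3 => ‖φ x‖ ^ 4) = Function.support φ := by
    ext x; simp [Function.support]
  have hM : 0 < massI φ := by
    rw [massI, integral_pos_iff_support_of_nonneg (fun x => by positivity) hMint, hMsupp]
    exact hsupp
  have hQ : 0 < quartI φ := by
    rw [quartI, integral_pos_iff_support_of_nonneg (fun x => by positivity) hQint, hQsupp]
    exact hsupp
  have habset : 0 ≤ a + b := by linarith
  have hrhs : 0 < (2*a + b) * Jab k α a b φ := by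
    rw [hid, hXeq]
    rcases lt_or_eq_of_le hb with hbneg | hb0
    · nlinarith [mul_nonneg (mul_nonneg (by linarith : (0:ℝ) ≤ -b) (by linarith : (0:ℝ) ≤ 2-α)) hP,
        mul_pos (by linarith : (0:ℝ) < -b) hM, mul_nonneg habset hQ0]
    · rw [hb0]
      nlinarith [mul_pos ha hQ]
  by_contra hle
  push_neg at hle
  nlinarith [mul_nonneg h2ab.le (neg_nonneg.mpr hle)]
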